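/- Let n and b be natural numbers with b ≥ 2, and let A = {(b+1)·b^(n+i) − 1 : i ∈ {0,1,…,n+1}}. Then A is a minimal system of generators of T_b(n): the submonoid of ℕ generated by A equals T_b(n), no proper subset of A generates T_b(n), and A has exactly n+2 elements; in particular the embedding dimension of T_b(n) is n+2. -/

import Mathlib

/-- The Thabit numerical semigroup base `b`: the additive submonoid of ℕ generated by
`{(b+1)·b^(n+i) − 1 : i ∈ ℕ}`. -/
def thabitSemigroup (b n : ℕ) : AddSubmonoid ℕ :=
  AddSubmonoid.closure {m : ℕ | ∃ i : ℕ, m = (b + 1) * b ^ (n + i) - 1}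

namespace ThabitAux

lemma mul_mem' {S : AddSubmonoid ℕ} {x : ℕ} (hx : x ∈ S) (c : ℕ) : c * x ∈ S := by
  simpa [smul_eq_mul] using nsmul_mem hx c

lemma one_le_tp {b : ℕ} (hb : 2 ≤ b) (k : ℕ) : 1 ≤ (b + 1) * b ^ k :=
  Nat.one_le_iff_ne_zero.2 (by positivity)

lemma mem_closure_gen {b n : ℕ} (hb : 2 ≤ b) (i : ℕ) :
    (b + 1) * b ^ (n + i) - 1 ∈
      AddSubmonoid.closure {m : ℕ | ∃ i ≤ n + 1, m = (b + 1) * b ^ (n + i) - 1} := by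
  set C := AddSubmonoid.closure {m : ℕ | ∃ i ≤ n + 1, m = (b + 1) * b ^ (n + i) - 1} with hC
  have ht : ∀ j ≤ n + 1, (b + 1) * b ^ (n + j) - 1 ∈ C := fun j hj =>
    AddSubmonoid.subset_closure ⟨j, hj, rfl⟩
  rcases le_or_gt i (n + 1) with hi | hi
  · exact ht i hi
  -- key pair induction
  have key : ∀ k : ℕ, ((b + 1) * b ^ (n + (n + 2 + k)) - 1 ∈ C) ∧
      ((b + 1) * b ^ (n + (n + 2 + k)) + b - 2 ∈ C) := by
    intro k
    induction k with
    | zero =>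
      set G := ∑ j ∈ Finset.range n, b ^ j with hGdef
      have hG : ((b : ℤ) - 1) * (G : ℤ) = (b : ℤ) ^ n - 1 := by
        push_cast [hGdef]
        exact mul_geom_sum _ _
      have hbn : (1 : ℤ) ≤ (b : ℤ) ^ n := one_le_pow₀ (by exact_mod_cast by omega)
      have hGle : (G : ℤ) ≤ (b : ℤ) ^ n - 1 := by nlinarith [Int.natCast_nonneg G]
      have hA : b ^ n + G ≤ b ^ (n + 2) := by
        have : ((b:ℤ))^n + (G:ℤ) ≤ ((b:ℤ))^(n+2) := by
          have hp : ((b:ℤ))^(n+2) = (b:ℤ)^2 * (b:ℤ)^n := by ring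
          nlinarith [hGle, hbn]
        exact_mod_cast this
      have hA2 : b ^ n + G + b ≤ b ^ (n + 2) := by
        have : ((b:ℤ))^n + (G:ℤ) + (b:ℤ) ≤ ((b:ℤ))^(n+2) := by
          have hp : ((b:ℤ))^(n+2) = (b:ℤ)^2 * (b:ℤ)^n := by ring
          nlinarith [hGle, hbn]
        exact_mod_cast this
      have h0 : (b + 1) * b ^ (n + 0) - 1 ∈ C := ht 0 (by omega)
      have h1 : (b + 1) * b ^ (n + 1) - 1 ∈ C := ht 1 (by omega)
      constructor
      · have e1 : (b + 1) * b ^ (n + (n + 2 + 0)) - 1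
            = (b ^ (n + 2) - (b ^ n + G)) * ((b + 1) * b ^ (n + 0) - 1)
              + (G + 1) * ((b + 1) * b ^ (n + 1) - 1) := by
          zify [one_le_tp hb (n + 0), one_le_tp hb (n + 1), one_le_tp hb (n + (n + 2 + 0)), hA]
          linear_combination (-((b : ℤ) + 1) * (b : ℤ) ^ n) * hG
        rw [e1]
        exact add_mem (mul_mem' h0 _) (mul_mem' h1 _)
      · have e2 : (b + 1) * b ^ (n + (n + 2 + 0)) + b - 2
            = (b ^ (n + 2) - (b ^ n + G + b)) * ((b + 1) * b ^ (n + 0) - 1)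
              + (G + 2) * ((b + 1) * b ^ (n + 1) - 1) := by
          have h2 : 2 ≤ (b + 1) * b ^ (n + (n + 2 + 0)) + b := by
            have := one_le_tp hb (n + (n + 2 + 0)); omega
          zify [one_le_tp hb (n + 0), one_le_tp hb (n + 1), h2, hA2]
          linear_combination (-((b : ℤ) + 1) * (b : ℤ) ^ n) * hG
        rw [e2]
        exact add_mem (mul_mem' h0 _) (mul_mem' h1 _)
    | succ k ih =>
      obtain ⟨iht, ihu⟩ := ih
      have h1 := one_le_tp hb (n + (n + 2 + k))
      have h1' := one_le_tp hb (n + (n + 2 + (k + 1)))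
      have h2 : 2 ≤ (b + 1) * b ^ (n + (n + 2 + k)) + b := by omega
      have h2' : 2 ≤ (b + 1) * b ^ (n + (n + 2 + (k + 1))) + b := by omega
      have hb1 : 1 ≤ b := by omega
      have hb2 : 2 ≤ b := hb
      constructor
      · have e1 : (b + 1) * b ^ (n + (n + 2 + (k + 1))) - 1
            = (b - 1) * ((b + 1) * b ^ (n + (n + 2 + k)) - 1)
              + ((b + 1) * b ^ (n + (n + 2 + k)) + b - 2) := by
          zify [h1, h1', h2, hb1, hb2]
          ring
        rw [e1]
        exact add_mem (mul_mem' iht _) ihu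
      · have e2 : (b + 1) * b ^ (n + (n + 2 + (k + 1))) + b - 2
            = (b - 2) * ((b + 1) * b ^ (n + (n + 2 + k)) - 1)
              + 2 * ((b + 1) * b ^ (n + (n + 2 + k)) + b - 2) := by
          zify [h1, h1', h2, h2', hb2]
          ring
        rw [e2]
        exact add_mem (mul_mem' iht _) (mul_mem' ihu 2)
  obtain ⟨k, rfl⟩ : ∃ k, i = n + 2 + k := ⟨i - (n + 2), by omega⟩
  exact (key k).1

end ThabitAux

theorem thabit_minimal_system_of_generators (n b : ℕ) (hb : 2 ≤ b) :
    AddSubmonoid.closure {m : ℕ | ∃ i ≤ n + 1, m = (b + 1) * b ^ (n + i) - 1}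
        = thabitSemigroup b n ∧
    (∀ X : Set ℕ, X ⊂ {m : ℕ | ∃ i ≤ n + 1, m = (b + 1) * b ^ (n + i) - 1} →
        AddSubmonoid.closure X ≠ thabitSemigroup b n) ∧
    Set.ncard {m : ℕ | ∃ i ≤ n + 1, m = (b + 1) * b ^ (n + i) - 1} = n + 2 := by
  have hb0 : 0 < b := by omega
  refine ⟨?_, ?_, ?_⟩
  · -- closure equality
    apply le_antisymm
    · exact AddSubmonoid.closure_mono (by rintro m ⟨i, hi, rfl⟩; exact ⟨i, rfl⟩)
    · exact AddSubmonoid.closure_le.2 (by rintro m ⟨i, rfl⟩; exact ThabitAux.mem_closure_gen hb i)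
  · -- minimality
    intro X hX hEq
    obtain ⟨t, htA, htX⟩ := Set.exists_of_ssubset hX
    obtain ⟨j, hj, rfl⟩ := htA
    set t := (b + 1) * b ^ (n + j) - 1 with htdef
    have hts : t ∈ thabitSemigroup b n := AddSubmonoid.subset_closure ⟨j, rfl⟩
    have htX' : t ∈ AddSubmonoid.closure X := hEq.symm ▸ hts
    have hsub : X ⊆ {m : ℕ | ∃ i ≤ n + 1, m = (b + 1) * b ^ (n + i) - 1} \ {t} := by
      intro x hx
      exact ⟨hX.1 hx, fun h => htX (h ▸ hx)⟩
    have htXd : t ∈ AddSubmonoid.closure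
        ({m : ℕ | ∃ i ≤ n + 1, m = (b + 1) * b ^ (n + i) - 1} \ {t}) :=
      AddSubmonoid.closure_mono hsub htX'
    -- invariant
    set M := (b + 1) * b ^ n with hMdef
    have hM3 : 3 ≤ M := by
      have h1 : 1 ≤ b ^ n := Nat.one_le_pow _ _ hb0
      calc 3 = 3 * 1 := by ring
        _ ≤ (b + 1) * b ^ n := Nat.mul_le_mul (by omega) h1
    have hP : t = 0 ∨ ∃ K, 0 < K ∧ (M ∣ t + K) ∧ (M - 1) * K ≤ t ∧ (K = 1 → t ≠ t) := by
      refine AddSubmonoid.closure_induction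
        (motive := fun m _ => m = 0 ∨ ∃ K, 0 < K ∧ (M ∣ m + K) ∧ (M - 1) * K ≤ m ∧ (K = 1 → m ≠ t))
        ?_ (Or.inl rfl) ?_ htXd
      · rintro x ⟨⟨i, hi, rfl⟩, hne⟩
        refine Or.inr ⟨1, one_pos, ?_, ?_, fun _ => hne⟩
        · have : (b + 1) * b ^ (n + i) - 1 + 1 = M * b ^ i := by
            rw [Nat.sub_add_cancel (ThabitAux.one_le_tp hb _), hMdef, pow_add, mul_assoc]
          rw [this]
          exact dvd_mul_right _ _
        · have hle : b ^ n ≤ b ^ (n + i) := Nat.pow_le_pow_right hb0 (by omega)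
          have : M ≤ (b + 1) * b ^ (n + i) := Nat.mul_le_mul_left _ hle
          omega
      · rintro x y hx hy (rfl | ⟨K1, hK1, hd1, hl1, he1⟩) hyP
        · simpa using hyP
        rcases hyP with rfl | ⟨K2, hK2, hd2, hl2, he2⟩
        · exact Or.inr ⟨K1, hK1, by simpa using hd1, by simpa using hl1, fun h => by
            simpa using he1 h⟩
        refine Or.inr ⟨K1 + K2, by omega, ?_, ?_, fun h => absurd h (by omega)⟩
        · have : x + y + (K1 + K2) = (x + K1) + (y + K2) := by omega
          rw [this]; exact dvd_add hd1 hd2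
        · calc (M - 1) * (K1 + K2) = (M - 1) * K1 + (M - 1) * K2 := by ring
            _ ≤ x + y := Nat.add_le_add hl1 hl2
    -- derive contradiction
    have het : t + 1 = M * b ^ j := by
      rw [htdef, Nat.sub_add_cancel (ThabitAux.one_le_tp hb _), hMdef, pow_add, mul_assoc]
    have hbj1 : 1 ≤ b ^ j := Nat.one_le_pow _ _ hb0
    rcases hP with h0 | ⟨K, hK0, hdvd, hle, hK1⟩
    · have : M * b ^ j = 1 := by omega
      nlinarith
    · have hKne1 : K ≠ 1 := fun h => hK1 h rfl
      have hdvd' : M ∣ K - 1 := by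
        have h1 : t + K = M * b ^ j + (K - 1) := by omega
        rw [h1] at hdvd
        exact (Nat.dvd_add_right (dvd_mul_right _ _)).1 hdvd
      have hMK : M + 1 ≤ K := by
        have := Nat.le_of_dvd (by omega) hdvd'
        omega
      have hbj : b ^ j ≤ b ^ (n + 1) := Nat.pow_le_pow_right hb0 (by omega)
      -- pass to ℤ
      have h1 : ((M : ℤ) - 1) * K ≤ (t : ℤ) := by
        have := hle
        zify [show 1 ≤ M by omega] at this
        exact this
      have h2 : (t : ℤ) + 1 = (M : ℤ) * (b : ℤ) ^ j := by exact_mod_cast het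
      have h3 : ((b : ℤ)) ^ j ≤ ((b : ℤ)) ^ (n + 1) := by exact_mod_cast hbj
      have h4 : ((M : ℤ)) = ((b : ℤ) + 1) * (b : ℤ) ^ n := by rw [hMdef]; push_cast; ring
      have h5 : (1 : ℤ) ≤ (b : ℤ) ^ n := by exact_mod_cast Nat.one_le_pow _ _ hb0
      have h6 : ((M : ℤ)) + 1 ≤ K := by exact_mod_cast hMK
      have h7 : (3 : ℤ) ≤ M := by exact_mod_cast hM3
      have hpn1 : ((b : ℤ)) ^ (n + 1) = (b : ℤ) * (b : ℤ) ^ n := by ring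
      nlinarith [mul_le_mul_of_nonneg_left h3 (by linarith : (0:ℤ) ≤ (M:ℤ)),
        mul_le_mul_of_nonneg_left h6 (by linarith : (0:ℤ) ≤ (M:ℤ) - 1)]
  · -- cardinality
    have hset : {m : ℕ | ∃ i ≤ n + 1, m = (b + 1) * b ^ (n + i) - 1}
        = (fun i => (b + 1) * b ^ (n + i) - 1) '' (Set.Iic (n + 1)) := by
      ext m
      constructor
      · rintro ⟨i, hi, rfl⟩; exact ⟨i, hi, rfl⟩
      · rintro ⟨i, hi, rfl⟩; exact ⟨i, hi, rfl⟩
    have hmono : StrictMono (fun i => (b + 1) * b ^ (n + i) - 1) := by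
      intro x y hxy
      have hlt : (b + 1) * b ^ (n + x) < (b + 1) * b ^ (n + y) := by
        have h := Nat.pow_lt_pow_right (show 1 < b by omega) (show n + x < n + y by omega)
        exact (Nat.mul_lt_mul_left (show 0 < b + 1 by omega)).2 h
      have h1 := ThabitAux.one_le_tp hb (n + x)
      show (b + 1) * b ^ (n + x) - 1 < (b + 1) * b ^ (n + y) - 1
      omega
    rw [hset, Set.ncard_image_of_injOn (hmono.injective.injOn), ← Finset.coe_Iic,
      Set.ncard_coe_finset, Nat.card_Iic]
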